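/- Let R be a finite distance monoid with arch(R) = 2, and let S = {s_1 < … < s_p} and T = {t_1 < … < t_q} be Archimedean classes with S < T. Then for all u, v ∈ [p] and all j ∈ [q], s_u ⊕ t_j = s_v ⊕ t_j, and this common value lies in T and is ≥ t_j. -/

import Mathlib

/-- A distance magma: a commutative magma with identity `0` and a compatible
total order satisfying positivity and monotonicity of addition. -/
class DistanceMagma (R : Type*) extends LinearOrder R, Zero R where
  dadd : R → R → R
  dadd_comm : ∀ r s : R, dadd r s = dadd s r
  dadd_zero : ∀ r : R, dadd r 0 = r
  le_dadd : ∀ r s : R, r ≤ dadd r s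
  dadd_le_dadd : ∀ {r s t u : R}, r ≤ t → s ≤ u → dadd r s ≤ dadd t u

/-- A distance monoid is an associative distance magma. -/
class DistanceMonoid (R : Type*) extends DistanceMagma R where
  dadd_assoc : ∀ r s t : R, dadd (dadd r s) t = dadd r (dadd s t)

open DistanceMagma

/-- `dnsmul m r` is the `m`-fold sum `r ⊕ ⋯ ⊕ r`. -/
def dnsmul {R : Type*} [DistanceMagma R] : ℕ → R → R
  | 0, _ => 0
  | (m+1), r => dadd r (dnsmul m r)

/-- `S` is a set of nonzero, mutually Archimedean elements. -/
def MutArch {R : Type*} [DistanceMagma R] (S : Set R) : Prop :=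
  (∀ r ∈ S, r ≠ 0) ∧ ∀ r ∈ S, ∀ s ∈ S, ∃ m : ℕ, 1 ≤ m ∧ r ≤ dnsmul m s

/-- An Archimedean class: a maximal set of nonzero, mutually Archimedean elements. -/
def IsArchClass {R : Type*} [DistanceMagma R] (S : Set R) : Prop :=
  S.Nonempty ∧ MutArch S ∧ ∀ T : Set R, MutArch T → S ⊆ T → T = S

/-- Sum of a list of elements of a distance magma (right-nested). -/
def dsum {R : Type*} [DistanceMagma R] : List R → R
  | [] => 0
  | a :: l => dadd a (dsum l)

/-- The Archimedean condition at level `m`: for every chain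
`r₀ ≤ r₁ ≤ ⋯ ≤ r_m`, `r₀ ⊕ r₁ ⊕ ⋯ ⊕ r_m = r₁ ⊕ ⋯ ⊕ r_m`. -/
def ArchAt (R : Type*) [DistanceMagma R] (m : ℕ) : Prop :=
  ∀ f : ℕ → R, (∀ i j, i ≤ j → f i ≤ f j) →
    dsum ((List.range (m+1)).map f) = dsum ((List.range m).map (fun i => f (i+1)))

/-- `R` has Archimedean complexity `n`: `n` is the least level at which
the Archimedean condition holds. -/
def HasArch (R : Type*) [DistanceMagma R] (n : ℕ) : Prop :=
  ArchAt R n ∧ ∀ m : ℕ, ArchAt R m → n ≤ m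


section Aux
variable {R : Type*} [DistanceMonoid R]

open DistanceMonoid

lemma dzero_le' (r : R) : (0:R) ≤ r := by
  have := le_dadd (0:R) r
  rwa [dadd_comm, dadd_zero] at this

lemma dnsmul_mono {a b : R} (h : a ≤ b) : ∀ m, dnsmul m a ≤ dnsmul m b
  | 0 => le_refl _
  | (m+1) => dadd_le_dadd h (dnsmul_mono h m)

lemma dnsmul_add (x : R) : ∀ m n, dnsmul (m+n) x = dadd (dnsmul m x) (dnsmul n x)
  | 0, n => by
      show dnsmul (0+n) x = dadd 0 (dnsmul n x)
      rw [Nat.zero_add, dadd_comm, dadd_zero]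
  | (m+1), n => by
      have h : m+1+n = m+n+1 := by omega
      rw [h, dnsmul, dnsmul, dnsmul_add x m n, dadd_assoc]

/-- Absorption from ArchAt 2: if x ≤ t then x ⊕ (x ⊕ t) = x ⊕ t. -/
lemma absorb (h2 : ArchAt R 2) {x t : R} (h : x ≤ t) :
    dadd x (dadd x t) = dadd x t := by
  have hf := h2 (fun i => if i ≤ 1 then x else t) (by
    intro i j hij
    split <;> split <;> first | rfl | exact h | omega)
  simp only [List.range_succ, List.range_zero, List.map, dsum] at hf
  norm_num at hf
  simp only [dsum] at hf
  rwa [dadd_zero] at hf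

lemma dnsmul_dadd_absorb (h2 : ArchAt R 2) {x t : R} (h : x ≤ t) :
    ∀ m, 1 ≤ m → dadd (dnsmul m x) t = dadd x t
  | 1, _ => by rw [dnsmul, dnsmul, dadd_zero]
  | (m+2), _ => by
      rw [dnsmul, dadd_assoc, dnsmul_dadd_absorb h2 h (m+1) (by omega), absorb h2 h]

end Aux

/-- In a finite distance monoid of Archimedean complexity 2, if `S < T` are
Archimedean classes, then for `u, v ∈ S` and `t ∈ T`, `u ⊕ t = v ⊕ t`, and
this common value lies in `T` and is `≥ t`. -/
theorem stmt14 {R : Type*} [DistanceMonoid R] [Fintype R] (h2 : HasArch R 2)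
    (S T : Set R) (hS : IsArchClass S) (hT : IsArchClass T)
    (hST : ∀ x ∈ S, ∀ y ∈ T, x < y)
    (u v : R) (hu : u ∈ S) (hv : v ∈ S) (t : R) (ht : t ∈ T) :
    DistanceMagma.dadd u t = DistanceMagma.dadd v t ∧
      DistanceMagma.dadd u t ∈ T ∧ t ≤ DistanceMagma.dadd u t := by
  classical
  obtain ⟨hTne, ⟨hTnz, hTm⟩, hTmax⟩ := hT
  obtain ⟨hSne, ⟨hSnz, hSm⟩, hSmax⟩ := hS
  have h2' : ArchAt R 2 := h2.1
  have ht0 : t ≠ 0 := hTnz t ht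
  -- the main equality, proven for ordered pair
  have key : ∀ a b : R, a ∈ S → b ∈ S → a ≤ b → dadd a t = dadd b t := by
    intro a b ha hb hab
    have hat : a ≤ t := le_of_lt (hST a ha t ht)
    obtain ⟨m, hm1, hmb⟩ := hSm b hb a ha
    apply le_antisymm
    · exact dadd_le_dadd hab (le_refl t)
    · calc dadd b t ≤ dadd (dnsmul m a) t := dadd_le_dadd hmb (le_refl t)
        _ = dadd a t := dnsmul_dadd_absorb h2' hat m hm1
  have heq : dadd u t = dadd v t := by
    rcases le_total u v with h | h
    · exact key u v hu hv h
    · exact (key v u hv hu h).symm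
  have hle : t ≤ dadd u t := by rw [dadd_comm]; exact le_dadd t u
  refine ⟨heq, ?_, hle⟩
  -- membership in T
  set w := dadd u t with hw
  have hw0 : w ≠ 0 := by
    intro h0
    exact ht0 (le_antisymm (h0 ▸ hle) (dzero_le' t))
  have hwle : w ≤ dnsmul 2 t := by
    have := dadd_le_dadd (le_of_lt (hST u hu t ht)) (le_refl t)
    calc w ≤ dadd t t := this
      _ = dadd t (dadd t 0) := by rw [dadd_zero]
      _ = dnsmul 2 t := rfl
  have hmut : MutArch (T ∪ {w}) := by
    constructor
    · rintro r (hr | hr)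
      · exact hTnz r hr
      · simp only [Set.mem_singleton_iff] at hr; subst hr; exact hw0
    · rintro r (hr | hr) s (hs | hs)
      · exact hTm r hr s hs
      · simp only [Set.mem_singleton_iff] at hs; subst hs
        obtain ⟨m, hm1, hmr⟩ := hTm r hr t ht
        exact ⟨m, hm1, le_trans hmr (dnsmul_mono hle m)⟩
      · simp only [Set.mem_singleton_iff] at hr; subst hr
        obtain ⟨m, hm1, hmt⟩ := hTm t ht s hs
        refine ⟨m + m, by omega, ?_⟩
        calc w ≤ dnsmul 2 t := hwle
          _ = dadd t (dadd t 0) := rfl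
          _ = dadd t t := by rw [dadd_zero]
          _ ≤ dadd (dnsmul m s) (dnsmul m s) := dadd_le_dadd hmt hmt
          _ = dnsmul (m + m) s := (dnsmul_add s m m).symm
      · simp only [Set.mem_singleton_iff] at hr hs; subst hr; subst hs
        exact ⟨1, le_refl 1, by rw [dnsmul, dnsmul, dadd_zero]⟩
  have := hTmax (T ∪ {w}) hmut (Set.subset_union_left)
  have : w ∈ T := this ▸ (Set.mem_union_right T rfl)
  exact this
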